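/- Let π : G → End_K(M) be a partial representation of a group G on a K-module M. Define M_g := Im π(g) and α_g : M_{g⁻¹} → M_g as the restriction of π(g). Then α = (G, M, {M_g}, {α_g}) is a partial action of G on the K-module M; in particular each α_g is a well-defined linear bijection M_{g⁻¹} → M_g with inverse α_{g⁻¹}, M_1 = M, α_1 = id, α_g(M_{g⁻¹} ∩ M_{g⁻¹h}) ⊆ M_g ∩ M_h, and α_g(α_h(m)) = α_{gh}(m) for all m ∈ M_{h⁻¹} ∩ M_{h⁻¹g⁻¹}. -/
import Mathlib


/-- A partial representation `π` of `G` on a `K`-module `M` induces a partial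
action: with `M_g = range (π g)` and `α_g = π g` restricted to `M_{g⁻¹}`, the
data `(G, M, {M_g}, {α_g})` is a partial action of `G` on the module `M`. -/
theorem stmt7 {K G M : Type*} [CommRing K] [Group G]
    [AddCommGroup M] [Module K M]
    (π : G → M →ₗ[K] M)
    (h1 : ∀ m : M, π 1 m = m)
    (h2 : ∀ (g h : G) (m : M), π g⁻¹ (π g (π h m)) = π g⁻¹ (π (g * h) m))
    (h3 : ∀ (g h : G) (m : M), π g (π h (π h⁻¹ m)) = π (g * h) (π h⁻¹ m)) :
    -- M₁ = M and α₁ = id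
    (LinearMap.range (π 1) = ⊤) ∧ (∀ m : M, π 1 m = m) ∧
    -- α_g maps M_{g⁻¹} into M_g (well-definedness of α_g : M_{g⁻¹} → M_g)
    (∀ (g : G) (m : M), m ∈ LinearMap.range (π g⁻¹) → π g m ∈ LinearMap.range (π g)) ∧
    -- α_g is injective on M_{g⁻¹} with inverse α_{g⁻¹}, and surjective onto M_g
    (∀ (g : G) (m : M), m ∈ LinearMap.range (π g⁻¹) → π g⁻¹ (π g m) = m) ∧
    (∀ (g : G) (m : M), m ∈ LinearMap.range (π g) →
      ∃ n ∈ LinearMap.range (π g⁻¹), π g n = m) ∧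
    -- α_g (M_{g⁻¹} ∩ M_{g⁻¹h}) ⊆ M_g ∩ M_h
    (∀ (g h : G) (m : M), m ∈ LinearMap.range (π g⁻¹) →
      m ∈ LinearMap.range (π (g⁻¹ * h)) →
      π g m ∈ LinearMap.range (π g) ∧ π g m ∈ LinearMap.range (π h)) ∧
    -- α_g ∘ α_h = α_{gh} on M_{h⁻¹} ∩ M_{h⁻¹g⁻¹}
    (∀ (g h : G) (m : M), m ∈ LinearMap.range (π h⁻¹) →
      m ∈ LinearMap.range (π (h⁻¹ * g⁻¹)) → π g (π h m) = π (g * h) m) := by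
  have invfix : ∀ (g : G) (m : M), m ∈ LinearMap.range (π g⁻¹) → π g⁻¹ (π g m) = m := by
    rintro g m ⟨x, rfl⟩
    have := h2 g g⁻¹ x
    simpa [h1] using this
  have fix : ∀ (g : G) (m : M), m ∈ LinearMap.range (π g) → π g (π g⁻¹ m) = m := by
    rintro g m ⟨x, rfl⟩
    have := h3 g g⁻¹ x
    simpa [h1] using this
  refine ⟨?_, h1, ?_, invfix, ?_, ?_, ?_⟩
  · rw [eq_top_iff]
    intro m _
    exact ⟨m, h1 m⟩
  · intro g m _
    exact ⟨m, rfl⟩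
  · intro g m hm
    exact ⟨π g⁻¹ m, ⟨m, rfl⟩, fix g m hm⟩
  · intro g h m hm1 hm2
    refine ⟨⟨m, rfl⟩, ?_⟩
    -- show π g m is fixed by π h ∘ π h⁻¹, hence in range π h
    obtain ⟨w, hw⟩ := hm2
    have e1 : π h⁻¹ (π g m) = π (h⁻¹ * g) m := by
      have t := h3 h⁻¹ g (π g m)
      rw [invfix g m hm1] at t
      simpa using t
    have e2 : π (h⁻¹ * g) m = π (g⁻¹ * h)⁻¹ (π (g⁻¹ * h) w) := by
      rw [← hw]; congr 1; group
    have e3 : π h (π (g⁻¹ * h)⁻¹ (π (g⁻¹ * h) w)) = π g m := by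
      have t := h3 h (g⁻¹ * h)⁻¹ w
      rw [inv_inv] at t
      rw [t, hw]
      congr 1; group
    refine ⟨π h⁻¹ (π g m), ?_⟩
    rw [e1, e2, e3]
  · intro g h m hm1 _
    have t := h3 g h (π h m)
    rwa [invfix h m hm1] at t
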